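/- Let k ≥ 3 and let C̄_{2k} denote the complement of the cycle graph on ZMod (2k), i.e. x and y are adjacent iff x ≠ y, y ≠ x+1 and y ≠ x−1. Let A be a unital C*-algebra and let p : ZMod (2k) → ZMod k → A be a family of projections such that: (a) ∑_{b ∈ ZMod k} p x b = 1 for every x; (b) p x b · p x' b = 0 whenever x and x' are adjacent in C̄_{2k}; (c) p x b and p x' b' commute whenever x and x' are adjacent in C̄_{2k}. Then p 0 b and p 1 c commute for all b, c ∈ ZMod k. -/
import Mathlib


/-- Adjacency in the complement `C̄ₘ` of the cycle graph on `ZMod m`: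
`x ~ y` iff `x ≠ y`, `y ≠ x + 1` and `y ≠ x - 1`. -/
def cycleComplAdj (m : ℕ) (x y : ZMod m) : Prop :=
  x ≠ y ∧ y ≠ x + 1 ∧ y ≠ x - 1

lemma zmod_cast_ne {n a b : ℕ} (ha : a < n) (hb : b < n) (h : a ≠ b) :
    (a : ZMod n) ≠ (b : ZMod n) := by
  intro hh
  have := congrArg ZMod.val hh
  rw [ZMod.val_cast_of_lt ha, ZMod.val_cast_of_lt hb] at this; exact h this

lemma sum_starmul_eq_zero {A : Type*} [CStarAlgebra A] {ι : Type*} (s : Finset ι) (f : ι → A)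
    (h : ∀ i ∈ s, ∃ u : A, f i = star u * u) (hs : ∑ i ∈ s, f i = 0) : ∀ i ∈ s, f i = 0 := by
  letI := CStarAlgebra.spectralOrder A
  haveI := CStarAlgebra.spectralOrderedRing A
  refine fun i hi => (Finset.sum_eq_zero_iff_of_nonneg fun j hj => ?_).mp hs i hi
  obtain ⟨u, hu⟩ := h j hj
  rw [hu]; exact star_mul_self_nonneg u

lemma cycleComplAdj_offset {n : ℕ} (hn : 6 ≤ n) (x : ZMod n) {v : ℕ} (h2 : 2 ≤ v)
    (hv : v ≤ n - 2) : cycleComplAdj n x (x + (v : ℕ)) := by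
  refine ⟨fun h => ?_, fun h => ?_, fun h => ?_⟩
  · have h0 : x + ((0:ℕ) : ZMod n) = x + ((v:ℕ) : ZMod n) := by simpa using h
    exact zmod_cast_ne (n := n) (by omega) (by omega) (by omega) (add_left_cancel h0)
  · have h0 : x + ((v:ℕ) : ZMod n) = x + ((1:ℕ) : ZMod n) := by simpa using h
    exact zmod_cast_ne (n := n) (by omega) (by omega) (by omega) (add_left_cancel h0)
  · have h1 : x + ((v:ℕ) : ZMod n) + 1 = x := by rw [h]; ring
    have h0 : x + (((v+1:ℕ)) : ZMod n) = x + ((0:ℕ) : ZMod n) := by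
      push_cast; rw [← add_assoc]; simpa using h1
    exact zmod_cast_ne (n := n) (by omega) (by omega) (by omega) (add_left_cancel h0)

lemma cycleComplAdj_symm {n : ℕ} {x y : ZMod n} (h : cycleComplAdj n x y) :
    cycleComplAdj n y x := by
  obtain ⟨h1, h2, h3⟩ := h
  refine ⟨Ne.symm h1, fun hh => h3 ?_, fun hh => h2 ?_⟩
  · rw [hh]; ring
  · rw [hh]; ring


/-- Let `k ≥ 3` and let `p : ZMod (2k) → ZMod k → A` be a family of
projections in a unital C*-algebra satisfying the relations of the oracular
quantum homomorphism space `Mor^{o+}(C̄_{2k}, K_k)`.  Then `p 0 b` and `p 1 c`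
commute for all `b c : ZMod k`. -/
theorem stmt4 {A : Type*} [CStarAlgebra A] (k : ℕ) [NeZero k] (hk : 3 ≤ k)
    (p : ZMod (2 * k) → ZMod k → A)
    (hproj : ∀ x b, star (p x b) = p x b ∧ p x b * p x b = p x b)
    (hsum : ∀ x, ∑ b : ZMod k, p x b = 1)
    (horth : ∀ (x x' : ZMod (2 * k)) (b : ZMod k),
      cycleComplAdj (2 * k) x x' → p x b * p x' b = 0)
    (hcomm : ∀ (x x' : ZMod (2 * k)) (b b' : ZMod k),
      cycleComplAdj (2 * k) x x' → p x b * p x' b' = p x' b' * p x b) :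
    ∀ b c : ZMod k, p 0 b * p 1 c = p 1 c * p 0 b := by
  have hk6 : 6 ≤ 2 * k := by omega
  have idem : ∀ (x : ZMod (2*k)) (b : ZMod k) (u : A), p x b * (p x b * u) = p x b * u :=
    fun x b u => by rw [← mul_assoc, (hproj x b).2]
  -- same-vertex orthogonality
  have hvert : ∀ (x : ZMod (2*k)) (b1 b2 : ZMod k), b1 ≠ b2 → p x b1 * p x b2 = 0 := by
    intro x b1 b2 hne
    have hsum' : ∑ b' ∈ Finset.univ.erase b2, p x b' = 1 - p x b2 := by
      have h := hsum x
      rw [← Finset.add_sum_erase _ _ (Finset.mem_univ b2)] at h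
      exact eq_sub_of_add_eq' h
    have hkey : ∀ b' ∈ Finset.univ.erase b2, p x b2 * p x b' * p x b2 = 0 := by
      apply sum_starmul_eq_zero
      · intro b' _
        refine ⟨p x b' * p x b2, ?_⟩
        rw [star_mul, (hproj x b').1, (hproj x b2).1]
        simp only [mul_assoc, idem]
      · calc ∑ b' ∈ Finset.univ.erase b2, p x b2 * p x b' * p x b2
            = p x b2 * (∑ b' ∈ Finset.univ.erase b2, p x b') * p x b2 := by
              rw [Finset.mul_sum, Finset.sum_mul]
          _ = 0 := by
              rw [hsum', mul_sub, mul_one, (hproj x b2).2, sub_self, zero_mul]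
    have h0 := hkey b1 (Finset.mem_erase.mpr ⟨hne, Finset.mem_univ b1⟩)
    have hu : star (p x b1 * p x b2) * (p x b1 * p x b2) = 0 := by
      rw [star_mul, (hproj x b1).1, (hproj x b2).1]
      simp only [mul_assoc, idem]
      rw [← mul_assoc]
      exact h0
    exact (CStarRing.star_mul_self_eq_zero_iff _).mp hu
  -- clique sums
  have hadj2 : ∀ (x : ZMod (2*k)) (i j : ℕ), i < k → j < k → i ≠ j →
      cycleComplAdj (2*k) (x + ((2*i:ℕ) : ZMod (2*k))) (x + ((2*j:ℕ) : ZMod (2*k))) := by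
    intro x i j hi hj hij
    rcases Nat.lt_or_ge i j with h | h
    · have key : x + ((2*j:ℕ) : ZMod (2*k))
          = (x + ((2*i:ℕ) : ZMod (2*k))) + ((2*(j-i):ℕ) : ZMod (2*k)) := by
        rw [add_assoc, ← Nat.cast_add]
        congr 2
        omega
      rw [key]
      exact cycleComplAdj_offset hk6 _ (by omega) (by omega)
    · have key : x + ((2*j:ℕ) : ZMod (2*k))
          = (x + ((2*i:ℕ) : ZMod (2*k))) + ((2*k - 2*(i-j):ℕ) : ZMod (2*k)) := by
        rw [add_assoc, ← Nat.cast_add]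
        have h2 : (2*i + (2*k - 2*(i-j)) : ℕ) = 2*k + 2*j := by omega
        rw [h2, Nat.cast_add, ZMod.natCast_self, zero_add]
      rw [key]
      exact cycleComplAdj_offset hk6 _ (by omega) (by omega)
  have hclique : ∀ (x : ZMod (2*k)) (c : ZMod k),
      ∑ i ∈ Finset.range k, p (x + ((2*i:ℕ) : ZMod (2*k))) c = 1 := by
    intro x c
    set q : ZMod k → A := fun c' => ∑ i ∈ Finset.range k, p (x + ((2*i:ℕ) : ZMod (2*k))) c'
      with hq
    have hqidem : ∀ c', q c' * q c' = q c' := by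
      intro c'
      rw [hq]
      simp only
      rw [Finset.sum_mul]
      refine Finset.sum_congr rfl fun i hi => ?_
      rw [Finset.mul_sum, Finset.sum_eq_single i]
      · exact (hproj _ _).2
      · intro j hj hji
        exact horth _ _ c' (hadj2 x i j (Finset.mem_range.mp hi) (Finset.mem_range.mp hj)
          (Ne.symm hji))
      · intro h; exact absurd hi h
    have hqstar : ∀ c', star (q c') = q c' := by
      intro c'; rw [hq]; simp only [star_sum]
      exact Finset.sum_congr rfl fun i _ => (hproj _ _).1
    have hsumq : ∑ c' : ZMod k, q c' = (k : ℕ) • (1:A) := by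
      rw [hq]
      simp only
      rw [Finset.sum_comm]
      have : ∀ i ∈ Finset.range k, ∑ c' : ZMod k, p (x + ((2*i:ℕ) : ZMod (2*k))) c' = 1 :=
        fun i _ => hsum _
      rw [Finset.sum_congr rfl this, Finset.sum_const, Finset.card_range]
    have hzero : ∑ c' : ZMod k, ((1:A) - q c') = 0 := by
      rw [Finset.sum_sub_distrib, hsumq, Finset.sum_const, Finset.card_univ, ZMod.card,
        sub_self]
    have hone := sum_starmul_eq_zero Finset.univ (fun c' => (1:A) - q c')
      (fun c' _ => ⟨(1:A) - q c', by
        have h1 : star ((1:A) - q c') = (1:A) - q c' := by rw [star_sub, star_one, hqstar]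
        rw [h1]
        have h2 : ((1:A) - q c') * ((1:A) - q c') = 1 - q c' - q c' + q c' * q c' := by
          noncomm_ring
        rw [h2, hqidem c']
        abel⟩) hzero c (Finset.mem_univ c)
    have : q c = 1 := by
      have := sub_eq_zero.mp hone
      exact this.symm
    exact this
  have hneg : ∀ m : ℕ, m ≤ 2*k → ((2*k - m : ℕ) : ZMod (2*k)) = -((m:ℕ) : ZMod (2*k)) := by
    intro m hm
    have h0 : ((2*k - m : ℕ) : ZMod (2*k)) + ((m:ℕ) : ZMod (2*k)) = 0 := by
      rw [← Nat.cast_add]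
      have h1 : (2*k - m + m : ℕ) = 2*k := by omega
      rw [h1, ZMod.natCast_self]
    exact eq_neg_of_add_eq_zero_left h0
  have hcast2 : ((2*(k-1) : ℕ) : ZMod (2*k)) = -2 := by
    have h1 : (2*(k-1):ℕ) = 2*k - 2 := by omega
    rw [h1, hneg 2 (by omega)]
    push_cast
    ring
  have hnbrR : ∀ (x : ZMod (2*k)) (c : ZMod k),
      p x c = p x c * p (x+1) c + p x c * p (x-1) c := by
    intro x c
    have h2 : p x c = ∑ i ∈ Finset.range k, p x c * p ((x+1) + ((2*i:ℕ):ZMod (2*k))) c := by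
      rw [← Finset.mul_sum, hclique (x+1) c, mul_one]
    have hsub : ({0, k-1} : Finset ℕ) ⊆ Finset.range k := by
      intro i hi
      simp only [Finset.mem_insert, Finset.mem_singleton] at hi
      rcases hi with h|h <;> simp only [Finset.mem_range] <;> omega
    have hz : ∀ i ∈ Finset.range k, i ∉ ({0, k-1} : Finset ℕ) →
        p x c * p ((x+1) + ((2*i:ℕ):ZMod (2*k))) c = 0 := by
      intro i hi hni
      simp only [Finset.mem_insert, Finset.mem_singleton, not_or] at hni
      simp only [Finset.mem_range] at hi
      have key : (x+1) + ((2*i:ℕ):ZMod (2*k)) = x + ((1+2*i : ℕ) : ZMod (2*k)) := by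
        push_cast; ring
      rw [key]
      exact horth _ _ c (cycleComplAdj_offset hk6 x (by omega) (by omega))
    have h3 : ∑ i ∈ Finset.range k, p x c * p ((x+1) + ((2*i:ℕ):ZMod (2*k))) c
        = p x c * p ((x+1) + ((2*0:ℕ):ZMod (2*k))) c
          + p x c * p ((x+1) + ((2*(k-1):ℕ):ZMod (2*k))) c := by
      rw [← Finset.sum_subset hsub hz, Finset.sum_pair (by omega : (0:ℕ) ≠ k-1)]
    have e0 : (x+1) + ((2*0:ℕ):ZMod (2*k)) = x + 1 := by norm_num
    have e1 : (x+1) + ((2*(k-1):ℕ):ZMod (2*k)) = x - 1 := by rw [hcast2]; ring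
    conv_lhs => rw [h2]
    rw [h3, e0, e1]
  have hnbrL : ∀ (x : ZMod (2*k)) (c : ZMod k),
      p x c = p (x+1) c * p x c + p (x-1) c * p x c := by
    intro x c
    have h2 : p x c = ∑ i ∈ Finset.range k, p ((x+1) + ((2*i:ℕ):ZMod (2*k))) c * p x c := by
      rw [← Finset.sum_mul, hclique (x+1) c, one_mul]
    have hsub : ({0, k-1} : Finset ℕ) ⊆ Finset.range k := by
      intro i hi
      simp only [Finset.mem_insert, Finset.mem_singleton] at hi
      rcases hi with h|h <;> simp only [Finset.mem_range] <;> omega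
    have hz : ∀ i ∈ Finset.range k, i ∉ ({0, k-1} : Finset ℕ) →
        p ((x+1) + ((2*i:ℕ):ZMod (2*k))) c * p x c = 0 := by
      intro i hi hni
      simp only [Finset.mem_insert, Finset.mem_singleton, not_or] at hni
      simp only [Finset.mem_range] at hi
      have key : (x+1) + ((2*i:ℕ):ZMod (2*k)) = x + ((1+2*i : ℕ) : ZMod (2*k)) := by
        push_cast; ring
      have hadj : cycleComplAdj (2*k) x ((x+1) + ((2*i:ℕ):ZMod (2*k))) := by
        rw [key]
        exact cycleComplAdj_offset hk6 x (by omega) (by omega)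
      exact horth _ _ c (cycleComplAdj_symm hadj)
    have h3 : ∑ i ∈ Finset.range k, p ((x+1) + ((2*i:ℕ):ZMod (2*k))) c * p x c
        = p ((x+1) + ((2*0:ℕ):ZMod (2*k))) c * p x c
          + p ((x+1) + ((2*(k-1):ℕ):ZMod (2*k))) c * p x c := by
      rw [← Finset.sum_subset hsub hz, Finset.sum_pair (by omega : (0:ℕ) ≠ k-1)]
    have e0 : (x+1) + ((2*0:ℕ):ZMod (2*k)) = x + 1 := by norm_num
    have e1 : (x+1) + ((2*(k-1):ℕ):ZMod (2*k)) = x - 1 := by rw [hcast2]; ring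
    conv_lhs => rw [h2]
    rw [h3, e0, e1]
  have hsame : ∀ (x : ZMod (2*k)) (c : ZMod k), p x c * p (x+1) c = p (x+1) c * p x c := by
    intro x c
    have h1 := hnbrR (x+1) c
    rw [show x + 1 - 1 = x by ring] at h1
    have h0 := hnbrR x c
    have horth02 : p x c * p (x+1+1) c = 0 := by
      rw [show x + 1 + 1 = x + ((2:ℕ):ZMod (2*k)) by push_cast; ring]
      exact horth _ _ c (cycleComplAdj_offset hk6 x le_rfl (by omega))
    have horthm2 : p (x-1) c * p (x+1+1) c = 0 := by
      rw [show x + 1 + 1 = (x-1) + ((3:ℕ):ZMod (2*k)) by push_cast; ring]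
      exact horth _ _ c (cycleComplAdj_offset hk6 (x-1) (by omega) (by omega))
    have hX : p x c * p (x+1) c = p x c - p x c * p (x-1) c := eq_sub_of_add_eq h0.symm
    have key : p x c * p (x+1) c = p x c * p (x+1) c * p x c := by
      calc p x c * p (x+1) c
          = p x c * (p (x+1) c * p (x+1+1) c + p (x+1) c * p x c) := by rw [← h1]
        _ = p x c * p (x+1) c * p (x+1+1) c + p x c * p (x+1) c * p x c := by noncomm_ring
        _ = (p x c - p x c * p (x-1) c) * p (x+1+1) c + p x c * p (x+1) c * p x c := by
            rw [← hX]
        _ = p x c * p (x+1+1) c - p x c * (p (x-1) c * p (x+1+1) c)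
              + p x c * p (x+1) c * p x c := by noncomm_ring
        _ = p x c * p (x+1) c * p x c := by
            rw [horth02, horthm2, mul_zero, sub_zero, zero_add]
    have hsa : star (p x c * p (x+1) c * p x c) = p x c * p (x+1) c * p x c := by
      rw [star_mul, star_mul, (hproj x c).1, (hproj (x+1) c).1, mul_assoc]
    symm
    calc p (x+1) c * p x c = star (p x c * p (x+1) c) := by
          rw [star_mul, (hproj x c).1, (hproj (x+1) c).1]
      _ = star (p x c * p (x+1) c * p x c) := by rw [← key]
      _ = p x c * p (x+1) c * p x c := hsa
      _ = p x c * p (x+1) c := key.symm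
  intro b c
  by_cases hbc : b = c
  · subst hbc
    have h := hsame 0 b
    rwa [zero_add] at h
  · have adj_m1_1 : cycleComplAdj (2*k) (-1:ZMod (2*k)) 1 := by
      have h := cycleComplAdj_offset hk6 (-1:ZMod (2*k)) (v:=2) le_rfl (by omega)
      rwa [show (-1:ZMod (2*k)) + ((2:ℕ):ZMod (2*k)) = 1 by push_cast; ring] at h
    have adj_1_m2 : cycleComplAdj (2*k) (1:ZMod (2*k)) (-2) := by
      have h := cycleComplAdj_offset hk6 (1:ZMod (2*k)) (v:=2*k-3) (by omega) (by omega)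
      rwa [show (1:ZMod (2*k)) + ((2*k-3:ℕ):ZMod (2*k)) = -2 by
        rw [hneg 3 (by omega)]; push_cast; ring] at h
    have adj_0_m2 : cycleComplAdj (2*k) (0:ZMod (2*k)) (-2) := by
      have h := cycleComplAdj_offset hk6 (0:ZMod (2*k)) (v:=2*k-2) (by omega) (by omega)
      rwa [show (0:ZMod (2*k)) + ((2*k-2:ℕ):ZMod (2*k)) = -2 by
        rw [hneg 2 (by omega)]; push_cast; ring] at h
    have hgd : p (-1:ZMod (2*k)) b * p 1 c = p 1 c * p (-1:ZMod (2*k)) b :=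
      hcomm _ _ _ _ adj_m1_1
    have hga : p (-1:ZMod (2*k)) b * p 0 b = p 0 b * p (-1:ZMod (2*k)) b := by
      have h := hsame (-1:ZMod (2*k)) b
      rwa [show (-1:ZMod (2*k)) + 1 = 0 by ring] at h
    have hdm2 : p 1 c * p (-2:ZMod (2*k)) b = p (-2:ZMod (2*k)) b * p 1 c :=
      hcomm _ _ _ _ adj_1_m2
    have ham2 : p 0 b * p (-2:ZMod (2*k)) b = 0 := horth _ _ _ adj_0_m2
    have hstep1 : p 0 b * p 1 c = p 0 b * p 1 c * p (-1:ZMod (2*k)) b := by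
      have h0 := hnbrR 0 b
      rw [zero_add, zero_sub] at h0
      calc p 0 b * p 1 c
          = (p 0 b * p 1 b + p 0 b * p (-1:ZMod (2*k)) b) * p 1 c := by rw [← h0]
        _ = p 0 b * (p 1 b * p 1 c) + p 0 b * (p (-1:ZMod (2*k)) b * p 1 c) := by noncomm_ring
        _ = p 0 b * (p 1 c * p (-1:ZMod (2*k)) b) := by
            rw [hvert 1 b c hbc, hgd, mul_zero, zero_add]
        _ = p 0 b * p 1 c * p (-1:ZMod (2*k)) b := by noncomm_ring
    have hstep2 : p (-1:ZMod (2*k)) b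
        = p 0 b * p (-1:ZMod (2*k)) b + p (-2:ZMod (2*k)) b * p (-1:ZMod (2*k)) b := by
      have h0 := hnbrL (-1:ZMod (2*k)) b
      rwa [show (-1:ZMod (2*k)) + 1 = 0 by ring, show (-1:ZMod (2*k)) - 1 = -2 by ring] at h0
    have hzero2 : p 0 b * (p 1 c * p (-2:ZMod (2*k)) b) * p (-1:ZMod (2*k)) b = 0 := by
      rw [hdm2, ← mul_assoc (p 0 b), ham2, zero_mul, zero_mul]
    have hstep3 : p 0 b * p 1 c
        = p 0 b * p 1 c * p 0 b * p (-1:ZMod (2*k)) b := by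
      calc p 0 b * p 1 c = p 0 b * p 1 c * p (-1:ZMod (2*k)) b := hstep1
        _ = p 0 b * p 1 c * (p 0 b * p (-1:ZMod (2*k)) b
              + p (-2:ZMod (2*k)) b * p (-1:ZMod (2*k)) b) := by rw [← hstep2]
        _ = p 0 b * p 1 c * p 0 b * p (-1:ZMod (2*k)) b
              + p 0 b * (p 1 c * p (-2:ZMod (2*k)) b) * p (-1:ZMod (2*k)) b := by noncomm_ring
        _ = p 0 b * p 1 c * p 0 b * p (-1:ZMod (2*k)) b := by rw [hzero2, add_zero]
    have hmove : p (-1:ZMod (2*k)) b * p 0 b * p 1 c * p 0 b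
        = p 0 b * p 1 c * p 0 b * p (-1:ZMod (2*k)) b := by
      calc p (-1:ZMod (2*k)) b * p 0 b * p 1 c * p 0 b
          = (p 0 b * p (-1:ZMod (2*k)) b) * p 1 c * p 0 b := by rw [hga]
        _ = p 0 b * (p (-1:ZMod (2*k)) b * p 1 c) * p 0 b := by noncomm_ring
        _ = p 0 b * (p 1 c * p (-1:ZMod (2*k)) b) * p 0 b := by rw [hgd]
        _ = p 0 b * p 1 c * (p (-1:ZMod (2*k)) b * p 0 b) := by noncomm_ring
        _ = p 0 b * p 1 c * (p 0 b * p (-1:ZMod (2*k)) b) := by rw [hga]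
        _ = p 0 b * p 1 c * p 0 b * p (-1:ZMod (2*k)) b := by noncomm_ring
    have hfin : star (p 0 b * p 1 c) = p 0 b * p 1 c := by
      conv_lhs => rw [hstep3]
      calc star (p 0 b * p 1 c * p 0 b * p (-1:ZMod (2*k)) b)
          = p (-1:ZMod (2*k)) b * p 0 b * p 1 c * p 0 b := by
            simp only [star_mul, (hproj 0 b).1, (hproj 1 c).1, (hproj (-1:ZMod (2*k)) b).1]
            noncomm_ring
        _ = p 0 b * p 1 c * p 0 b * p (-1:ZMod (2*k)) b := hmove
        _ = p 0 b * p 1 c := hstep3.symm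
    have hfin2 := hfin
    rw [star_mul, (hproj 0 b).1, (hproj 1 c).1] at hfin2
    exact hfin2.symm
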